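/- (Argument oscillation bound) Let φ : A_q → ℂ be a biholomorphism onto its image A with continuous extension φ̄ : Ā_q → Ā, and suppose 0 ∉ Ā. Let θ̃ : [q,1] × [0,2π] → ℝ be a continuous lift of (u,t) ↦ arg(φ̄(u·e^{it})) ∈ ℝ/2πℤ. Then for every u ∈ [q,1], the oscillation osc_u := max_{t} θ̃(u,t) - min_t θ̃(u,t) satisfies osc_u ≤ max(osc_q, osc_1) + 2π. -/

import Mathlib

open Complex

/-- Oscillation of θ̃ on the circle of radius u. -/
noncomputable def osc (thetaLift : ℝ × ℝ → ℝ) (u : ℝ) : ℝ :=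
  sSup ((fun t => thetaLift (u, t)) '' Set.Icc 0 (2 * Real.pi)) -
    sInf ((fun t => thetaLift (u, t)) '' Set.Icc 0 (2 * Real.pi))

open Set

noncomputable section

local notation "π" => Real.pi

lemma twopi_pos : (0:ℝ) < 2 * π := by positivity

/-- A continuous integer-valued function on a preconnected set takes equal values. -/
lemma intval_const {X : Type*} [TopologicalSpace X] {s : Set X} (hs : IsPreconnected s)
    {f : X → ℝ} (hf : ContinuousOn f s) (hint : ∀ x ∈ s, ∃ m : ℤ, f x = m)
    {x y : X} (hx : x ∈ s) (hy : y ∈ s) : f x = f y := by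
  have key : ∀ a ∈ s, ∀ b ∈ s, ¬ (f a < f b) := by
    intro a ha b hb hab
    obtain ⟨m₁, hm₁⟩ := hint a ha
    obtain ⟨m₂, hm₂⟩ := hint b hb
    have hm : ((m₁:ℝ) + 1/2) ∈ Icc (f a) (f b) := by
      have : (m₁:ℝ) < m₂ := by rw [← hm₁, ← hm₂]; exact hab
      have h12 : (m₁:ℤ) + 1 ≤ m₂ := by exact_mod_cast this
      constructor
      · rw [hm₁]; linarith
      · rw [hm₂]
        have : ((m₁:ℝ) + 1) ≤ m₂ := by exact_mod_cast h12
        linarith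
    obtain ⟨z, hz, hfz⟩ := hs.intermediate_value ha hb hf hm
    obtain ⟨m₃, hm₃⟩ := hint z hz
    rw [hm₃] at hfz
    have : (2*m₃ : ℤ) = 2*m₁ + 1 := by
      have : (2*m₃ : ℝ) = 2*m₁ + 1 := by linarith
      exact_mod_cast this
    omega
  rcases lt_trichotomy (f x) (f y) with h | h | h
  · exact absurd h (key x hx y hy)
  · exact h
  · exact absurd h (key y hy x hx)

/-- being a continuous logarithm of `g` on `s`. -/
def IsLiftOn (ℓ g : ℝ → ℂ) (s : Set ℝ) : Prop :=
  ContinuousOn ℓ s ∧ ∀ t ∈ s, Complex.exp (ℓ t) = g t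

/-- two lifts differ by a constant. -/
lemma liftOn_sub_const {ℓ₁ ℓ₂ g : ℝ → ℂ} {s : Set ℝ} (hs : IsPreconnected s)
    (h₁ : IsLiftOn ℓ₁ g s) (h₂ : IsLiftOn ℓ₂ g s) {t u : ℝ} (ht : t ∈ s) (hu : u ∈ s) :
    ℓ₁ t - ℓ₂ t = ℓ₁ u - ℓ₂ u := by
  have hpt : ∀ r ∈ s, ∃ m : ℤ, ℓ₁ r - ℓ₂ r = (m:ℂ) * (2 * π * I) := by
    intro r hr
    have : Complex.exp (ℓ₁ r - ℓ₂ r) = 1 := by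
      rw [Complex.exp_sub, h₁.2 r hr, h₂.2 r hr, div_self]
      intro h; have := h₂.2 r hr; rw [h] at this; exact Complex.exp_ne_zero _ this
    exact Complex.exp_eq_one_iff.mp this
  have him : ∀ r ∈ s, ∃ m : ℤ, (ℓ₁ r - ℓ₂ r).im / (2*π) = m := by
    intro r hr
    obtain ⟨m, hm⟩ := hpt r hr
    refine ⟨m, ?_⟩
    rw [hm]
    have h2 : ((m:ℂ) * (2 * ↑π * I)).im = m * (2*π) := by
      simp [Complex.mul_im, Complex.mul_re]
      try ring
    rw [h2]
    field_simp
  have hcont : ContinuousOn (fun r => (ℓ₁ r - ℓ₂ r).im / (2*π)) s :=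
    (Complex.continuous_im.comp_continuousOn (h₁.1.sub h₂.1)).div_const _
  have heq : (ℓ₁ t - ℓ₂ t).im / (2*π) = (ℓ₁ u - ℓ₂ u).im / (2*π) :=
    intval_const hs hcont him ht hu
  have himeq : (ℓ₁ t - ℓ₂ t).im = (ℓ₁ u - ℓ₂ u).im := by
    field_simp at heq; exact heq
  obtain ⟨m₁, hm₁⟩ := hpt t ht
  obtain ⟨m₂, hm₂⟩ := hpt u hu
  have hre : (ℓ₁ t - ℓ₂ t).re = (ℓ₁ u - ℓ₂ u).re := by
    rw [hm₁, hm₂]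
    simp [Complex.mul_re]
  exact Complex.ext hre himeq

/-- gluing two continuous functions at a point. -/
lemma glue1D {f₁ f₂ : ℝ → ℂ} {A B C : ℝ} (hAB : A ≤ B) (hBC : B ≤ C)
    (h₁ : ContinuousOn f₁ (Icc A B)) (h₂ : ContinuousOn f₂ (Icc B C)) (hm : f₁ B = f₂ B) :
    ContinuousOn (fun t => if t ≤ B then f₁ t else f₂ t) (Icc A C) := by
  rw [← Set.Icc_union_Icc_eq_Icc hAB hBC]
  set g := fun t => if t ≤ B then f₁ t else f₂ t with hg
  have hg1 : ContinuousOn g (Icc A B) := by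
    apply h₁.congr
    intro t ht; simp only [hg]; rw [if_pos ht.2]
  have hg2 : ContinuousOn g (Icc B C) := by
    apply h₂.congr
    intro t ht
    simp only [hg]
    by_cases h : t ≤ B
    · have : t = B := le_antisymm h ht.1
      rw [if_pos h, this, hm]
    · rw [if_neg h]
  intro x hx
  rcases hx with hx | hx
  · refine (hg1.continuousWithinAt hx).union ?_
    by_cases hxB : x ∈ Icc B C
    · exact hg2.continuousWithinAt hxB
    · exact continuousWithinAt_of_notMem_closure (by rwa [isClosed_Icc.closure_eq])
  · refine ContinuousWithinAt.union ?_ (hg2.continuousWithinAt hx)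
    by_cases hxB : x ∈ Icc A B
    · exact hg1.continuousWithinAt hxB
    · exact continuousWithinAt_of_notMem_closure (by rwa [isClosed_Icc.closure_eq])

lemma re_pos_of_near_one {w : ℂ} (h : ‖w - 1‖ < 1) : w ∈ Complex.slitPlane := by
  rw [Complex.mem_slitPlane_iff]
  left
  have h1 : |(w - 1).re| ≤ ‖w - 1‖ := Complex.abs_re_le_norm _
  have : (w - 1).re = w.re - 1 := by simp
  rw [this] at h1
  have := abs_le.mp h1
  linarith [this.1]

/-- Existence of a continuous logarithm on a compact interval. -/
lemma exists_liftOn {g : ℝ → ℂ} {A B : ℝ} (hAB : A ≤ B) (hg : ContinuousOn g (Icc A B))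
    (h0 : ∀ t ∈ Icc A B, g t ≠ 0) : ∃ ℓ, IsLiftOn ℓ g (Icc A B) := by
  have hcpt : IsCompact (Icc A B) := isCompact_Icc
  have hne : (Icc A B).Nonempty := ⟨A, le_refl A, hAB⟩
  have habs : ContinuousOn (fun t => ‖g t‖) (Icc A B) :=
    continuous_norm.comp_continuousOn hg
  obtain ⟨t₀, ht₀, hmin⟩ := hcpt.exists_isMinOn hne habs
  set ε := ‖g t₀‖ with hε
  have hεpos : 0 < ε := by
    rw [hε]; exact norm_pos_iff.mpr (h0 t₀ ht₀)
  have huc := Metric.uniformContinuousOn_iff.mp (hcpt.uniformContinuousOn_of_continuous hg) ε hεpos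
  obtain ⟨δ, hδpos, hδ⟩ := huc
  -- step extension lemma
  have step : ∀ c ∈ Icc A B, ∀ c' ∈ Icc A B, c ≤ c' → c' - c ≤ δ/2 →
      (∃ ℓ, IsLiftOn ℓ g (Icc A c)) → ∃ ℓ, IsLiftOn ℓ g (Icc A c') := by
    intro c hc c' hc' hcc' hdist ⟨ℓ, hℓ⟩
    refine ⟨fun t => if t ≤ c then ℓ t else ℓ c + Complex.log (g t / g c), ?_, ?_⟩
    · apply glue1D hc.1 hcc' hℓ.1
      · apply ContinuousOn.add continuousOn_const
        apply ContinuousOn.clog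
        · exact ContinuousOn.div (hg.mono (fun t ht => ⟨le_trans hc.1 ht.1, le_trans ht.2 hc'.2⟩))
            continuousOn_const (fun t ht => h0 c hc)
        · intro t ht
          apply re_pos_of_near_one
          have h1 : g t / g c - 1 = (g t - g c) / g c := div_sub_one (h0 c hc)
          rw [h1, norm_div]
          rw [div_lt_one (by exact norm_pos_iff.mpr (h0 c hc))]
          have htB : t ∈ Icc A B := ⟨le_trans hc.1 ht.1, le_trans ht.2 hc'.2⟩
          calc ‖g t - g c‖ = dist (g t) (g c) := by rw [Complex.dist_eq]
            _ < ε := hδ t htB c hc (by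
                rw [Real.dist_eq]
                have : |t - c| = t - c := abs_of_nonneg (by linarith [ht.1])
                rw [this]; linarith [ht.2, hδpos])
            _ ≤ ‖g c‖ := hmin hc
      · rw [div_self (h0 c hc), Complex.log_one, add_zero]
    · intro t ht
      by_cases h : t ≤ c
      · simp only [if_pos h]; exact hℓ.2 t ⟨ht.1, h⟩
      · simp only [if_neg h]
        have htB : t ∈ Icc A B := ⟨ht.1, le_trans ht.2 hc'.2⟩
        rw [Complex.exp_add, hℓ.2 c ⟨hc.1, le_refl c⟩, Complex.exp_log (by
          apply div_ne_zero (h0 t htB) (h0 c hc))]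
        rw [mul_comm, div_mul_cancel₀ _ (h0 c hc)]
  -- induction
  have main : ∀ k : ℕ, ∃ ℓ, IsLiftOn ℓ g (Icc A (min B (A + k * (δ/2)))) := by
    intro k
    induction k with
    | zero =>
      have : min B (A + (0:ℕ) * (δ/2)) = A := by
        simp only [Nat.cast_zero, zero_mul, add_zero]
        exact min_eq_right hAB
      rw [this]
      refine ⟨fun _ => Complex.log (g A), continuousOn_const, ?_⟩
      intro t ht
      have : t = A := le_antisymm ht.2 ht.1
      rw [this, Complex.exp_log (h0 A ⟨le_refl A, hAB⟩)]
    | succ k ih =>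
      have hk0 : (0:ℝ) ≤ (k:ℝ) * (δ/2) := by positivity
      have hk1 : (0:ℝ) ≤ ((k:ℕ)+1:ℝ) * (δ/2) := by positivity
      have hmono : (k:ℝ) * (δ/2) ≤ ((k:ℝ)+1) * (δ/2) := by nlinarith
      have hcast : ((k+1:ℕ):ℝ) = (k:ℝ) + 1 := by push_cast; ring
      refine step (min B (A + k * (δ/2))) ⟨le_min hAB (by linarith), min_le_left _ _⟩
        (min B (A + (k+1:ℕ) * (δ/2))) ⟨le_min hAB (by rw [hcast]; linarith), min_le_left _ _⟩
        ?_ ?_ ih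
      · apply min_le_min le_rfl
        have : A + (k:ℝ)*(δ/2) ≤ A + ((k:ℝ)+1)*(δ/2) := by linarith
        calc A + (k:ℝ)*(δ/2) ≤ A + ((k:ℝ)+1)*(δ/2) := this
          _ = A + ((k+1:ℕ):ℝ)*(δ/2) := by rw [hcast]
      · rcases le_total B (A + k*(δ/2)) with h | h
        · have h1 : min B (A + (k:ℝ)*(δ/2)) = B := min_eq_left h
          have h2 : min B (A + ((k+1:ℕ):ℝ)*(δ/2)) = B := by
            apply min_eq_left; rw [hcast]; nlinarith
          rw [h1, h2]; linarith
        · have h1 : min B (A + (k:ℝ)*(δ/2)) = A + (k:ℝ)*(δ/2) := min_eq_right h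
          have h3 := min_le_right B (A + ((k+1:ℕ):ℝ)*(δ/2))
          rw [h1]
          rw [hcast] at h3
          push_cast
          linarith
  obtain ⟨k, hk⟩ := exists_nat_ge ((B - A) / (δ/2))
  obtain ⟨ℓ, hℓ⟩ := main k
  have : min B (A + k * (δ/2)) = B := by
    apply min_eq_left
    rw [div_le_iff₀ (by linarith)] at hk
    linarith
  rw [this] at hℓ
  exact ⟨ℓ, hℓ⟩
open Classical in
/-- winding of a loop `g` on `[0,2π]`, as a real. -/
noncomputable def wind (g : ℝ → ℂ) : ℝ :=
  if h : ∃ ℓ, IsLiftOn ℓ g (Icc 0 (2*π)) then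
    ((h.choose (2*π)).im - (h.choose 0).im) / (2*π) else 0

lemma wind_eq_of_lift {g ℓ : ℝ → ℂ} (h : IsLiftOn ℓ g (Icc 0 (2*π))) :
    wind g = ((ℓ (2*π)).im - (ℓ 0).im) / (2*π) := by
  have hex : ∃ ℓ', IsLiftOn ℓ' g (Icc 0 (2*π)) := ⟨ℓ, h⟩
  rw [wind, dif_pos hex]
  have h2π : (2*π) ∈ Icc (0:ℝ) (2*π) := ⟨twopi_pos.le, le_refl _⟩
  have h0 : (0:ℝ) ∈ Icc (0:ℝ) (2*π) := ⟨le_refl _, twopi_pos.le⟩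
  have hc := liftOn_sub_const isPreconnected_Icc hex.choose_spec h h2π h0
  have him := congrArg Complex.im hc
  simp only [Complex.sub_im] at him
  congr 1
  linarith

lemma wind_int {g ℓ : ℝ → ℂ} (h : IsLiftOn ℓ g (Icc 0 (2*π))) (hloop : g 0 = g (2*π)) :
    ∃ m : ℤ, wind g = m := by
  have h2π : (2*π) ∈ Icc (0:ℝ) (2*π) := ⟨twopi_pos.le, le_refl _⟩
  have h0 : (0:ℝ) ∈ Icc (0:ℝ) (2*π) := ⟨le_refl _, twopi_pos.le⟩
  have hexp : Complex.exp (ℓ (2*π) - ℓ 0) = 1 := by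
    rw [Complex.exp_sub, h.2 _ h2π, h.2 _ h0, ← hloop, div_self]
    intro hz
    exact Complex.exp_ne_zero _ (by rw [h.2 _ h0, hz])
  obtain ⟨m, hm⟩ := Complex.exp_eq_one_iff.mp hexp
  refine ⟨m, ?_⟩
  rw [wind_eq_of_lift h]
  have h1 : (ℓ (2*π)).im - (ℓ 0).im = (ℓ (2*π) - ℓ 0).im := by simp [Complex.sub_im]
  rw [h1, hm]
  have h2 : ((m:ℂ) * (2 * ↑π * I)).im = m * (2*π) := by
    simp [Complex.mul_im, Complex.mul_re]
    try ring
  rw [h2]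
  field_simp

/-- winding numbers are constant along homotopies of loops. -/
lemma wind_const_of_homotopy {H : ℝ → ℝ → ℂ} {r₁ r₂ : ℝ} (hr : r₁ ≤ r₂)
    (hH : ContinuousOn (fun p : ℝ × ℝ => H p.1 p.2) (Icc r₁ r₂ ×ˢ Icc 0 (2*π)))
    (hne : ∀ r ∈ Icc r₁ r₂, ∀ t ∈ Icc 0 (2*π), H r t ≠ 0)
    (hloop : ∀ r ∈ Icc r₁ r₂, H r 0 = H r (2*π)) :
    wind (H r₁) = wind (H r₂) := by
  have hKc : IsCompact (Icc r₁ r₂ ×ˢ Icc 0 (2*π)) := isCompact_Icc.prod isCompact_Icc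
  have hKne : (Icc r₁ r₂ ×ˢ Icc 0 (2*π)).Nonempty :=
    ⟨(r₁, 0), Set.mk_mem_prod ⟨le_refl _, hr⟩ ⟨le_refl _, twopi_pos.le⟩⟩
  have habs : ContinuousOn (fun p : ℝ × ℝ => ‖H p.1 p.2‖) (Icc r₁ r₂ ×ˢ Icc 0 (2*π)) :=
    continuous_norm.comp_continuousOn hH
  obtain ⟨p₀, hp₀, hminp⟩ := hKc.exists_isMinOn hKne habs
  have hεpos : 0 < ‖H p₀.1 p₀.2‖ := norm_pos_iff.mpr (hne p₀.1 hp₀.1 p₀.2 hp₀.2)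
  obtain ⟨δ, hδpos, hδ⟩ := Metric.uniformContinuousOn_iff.mp
    (hKc.uniformContinuousOn_of_continuous hH) _ hεpos
  have hslice : ∀ r ∈ Icc r₁ r₂, ContinuousOn (H r) (Icc 0 (2*π)) := by
    intro r hrm
    have hc : ContinuousOn (fun t : ℝ => ((r, t) : ℝ × ℝ)) (Icc 0 (2*π)) :=
      (continuous_const.prodMk continuous_id).continuousOn
    exact hH.comp hc (fun t ht => Set.mk_mem_prod hrm ht)
  have hlex : ∀ r ∈ Icc r₁ r₂, ∃ ℓ, IsLiftOn ℓ (H r) (Icc 0 (2*π)) := fun r hrm =>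
    exists_liftOn twopi_pos.le (hslice r hrm) (hne r hrm)
  have hloc : ∀ r ∈ Icc r₁ r₂, ∀ r' ∈ Icc r₁ r₂, |r' - r| < δ → wind (H r') = wind (H r) := by
    intro r hrm r' hr'm hdist
    obtain ⟨ℓ, hℓ⟩ := hlex r hrm
    have hQs : ∀ t ∈ Icc (0:ℝ) (2*π), ‖H r' t / H r t - 1‖ < 1 := by
      intro t ht
      have h1 : H r' t / H r t - 1 = (H r' t - H r t) / H r t := div_sub_one (hne r hrm t ht)
      rw [h1, norm_div, div_lt_one (norm_pos_iff.mpr (hne r hrm t ht))]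
      have hd : dist ((r', t) : ℝ × ℝ) ((r, t) : ℝ × ℝ) < δ := by
        rw [Prod.dist_eq]
        simp only [dist_self]
        rw [Real.dist_eq]
        rw [max_eq_left (abs_nonneg _)]
        exact hdist
      calc ‖H r' t - H r t‖ = dist (H r' t) (H r t) := by rw [Complex.dist_eq]
        _ < ‖H p₀.1 p₀.2‖ := hδ (r', t) (Set.mk_mem_prod hr'm ht) (r, t) (Set.mk_mem_prod hrm ht) hd
        _ ≤ ‖H r t‖ := hminp (Set.mk_mem_prod hrm ht)
    have hℓ' : IsLiftOn (fun t => ℓ t + Complex.log (H r' t / H r t)) (H r') (Icc 0 (2*π)) := by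
      constructor
      · apply hℓ.1.add
        apply ContinuousOn.clog
        · exact (hslice r' hr'm).div (hslice r hrm) (fun t ht => hne r hrm t ht)
        · intro t ht
          exact re_pos_of_near_one (hQs t ht)
      · intro t ht
        rw [Complex.exp_add, hℓ.2 t ht,
          Complex.exp_log (div_ne_zero (hne r' hr'm t ht) (hne r hrm t ht))]
        rw [mul_comm, div_mul_cancel₀ _ (hne r hrm t ht)]
    rw [wind_eq_of_lift hℓ', wind_eq_of_lift hℓ]
    have hQeq : H r' (2*π) / H r (2*π) = H r' 0 / H r 0 := by
      rw [← hloop r hrm, ← hloop r' hr'm]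
    simp only [Complex.add_im]
    rw [hQeq]
    ring
  have hiv : ∀ r ∈ Icc r₁ r₂, ∃ m : ℤ, wind (H r) = m := by
    intro r hrm
    obtain ⟨ℓ, hℓ⟩ := hlex r hrm
    exact wind_int hℓ (hloop r hrm)
  have hcont : ContinuousOn (fun r => wind (H r)) (Icc r₁ r₂) := by
    intro r hrm
    have hev : (fun r' => wind (H r')) =ᶠ[nhdsWithin r (Icc r₁ r₂)] (fun _ => wind (H r)) := by
      filter_upwards [self_mem_nhdsWithin,
        mem_nhdsWithin_of_mem_nhds (Metric.ball_mem_nhds r hδpos)] with r' hr' hball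
      exact hloc r hrm r' hr' (by rw [← Real.dist_eq]; exact Metric.mem_ball.mp hball)
    exact (continuousWithinAt_const).congr_of_eventuallyEq hev rfl
  exact intval_const isPreconnected_Icc hcont hiv ⟨le_refl _, hr⟩ ⟨hr, le_refl _⟩

lemma wind_sub_const_of_lt {γ : ℝ → ℂ} {x : ℂ} (hγ : ContinuousOn γ (Icc 0 (2*π)))
    (hloop : γ 0 = γ (2*π)) (hx : ∀ t ∈ Icc (0:ℝ) (2*π), ‖γ t‖ < ‖x‖) :
    wind (fun t => γ t - x) = 0 := by
  have h0m : (0:ℝ) ∈ Icc (0:ℝ) (2*π) := ⟨le_refl _, twopi_pos.le⟩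
  have hx0 : x ≠ 0 := by
    intro h
    have h2 := hx 0 h0m
    rw [h] at h2
    simp only [norm_zero] at h2
    exact (norm_nonneg _).not_gt h2
  have key : ∀ t ∈ Icc (0:ℝ) (2*π), ‖γ t / x‖ < 1 := by
    intro t ht
    rw [norm_div, div_lt_one (norm_pos_iff.mpr hx0)]
    exact hx t ht
  have hne1 : ∀ t ∈ Icc (0:ℝ) (2*π), 0 < (1 - γ t / x).re := by
    intro t ht
    have h1 : (γ t / x).re ≤ ‖γ t / x‖ := Complex.re_le_norm _
    have h2 : (1 - γ t / x).re = 1 - (γ t / x).re := by simp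
    rw [h2]
    linarith [key t ht]
  have hlift : IsLiftOn (fun t => Complex.log (-x) + Complex.log (1 - γ t / x))
      (fun t => γ t - x) (Icc 0 (2*π)) := by
    constructor
    · apply continuousOn_const.add
      apply ContinuousOn.clog (continuousOn_const.sub (hγ.div_const x))
      intro t ht
      rw [Complex.mem_slitPlane_iff]
      left
      exact hne1 t ht
    · intro t ht
      have hn0 : (1 - γ t / x) ≠ 0 := by
        intro h
        have := hne1 t ht
        rw [h] at this
        simp at this
      rw [Complex.exp_add, Complex.exp_log (neg_ne_zero.mpr hx0), Complex.exp_log hn0]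
      field_simp
      ring
  rw [wind_eq_of_lift hlift, hloop]
  ring

lemma wind_sub_const_eq_zero {γ : ℝ → ℂ} {x : ℂ} (hγ : ContinuousOn γ (Icc 0 (2*π)))
    (hloop : γ 0 = γ (2*π)) (hx0 : ∀ t ∈ Icc (0:ℝ) (2*π), γ t ≠ x)
    (hxmax : ∀ t ∈ Icc (0:ℝ) (2*π), ‖γ t‖ ≤ ‖x‖) :
    wind (fun t => γ t - x) = 0 := by
  have h0m : (0:ℝ) ∈ Icc (0:ℝ) (2*π) := ⟨le_refl _, twopi_pos.le⟩
  have hxpos : 0 < ‖x‖ := by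
    rcases eq_or_ne x 0 with h | h
    · exfalso
      apply hx0 0 h0m
      have h2 := hxmax 0 h0m
      rw [h] at h2 ⊢
      simp only [norm_zero] at h2
      exact norm_eq_zero.mp (le_antisymm h2 (norm_nonneg _))
    · exact norm_pos_iff.mpr h
  have hhom := wind_const_of_homotopy (zero_le_one (α := ℝ))
    (H := fun r t => γ t - (1+(r:ℂ))*x)
    (by
      apply ContinuousOn.sub
      · exact hγ.comp continuous_snd.continuousOn (fun p hp => (Set.mem_prod.mp hp).2)
      · exact ((continuous_const.add
          (Complex.continuous_ofReal.comp continuous_fst)).mul continuous_const).continuousOn)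
    (by
      intro r hrm t ht
      rcases eq_or_lt_of_le hrm.1 with h | h
      · rw [← h]
        norm_num
        exact sub_ne_zero.mpr (hx0 t ht)
      · intro hz
        have heq : γ t = (1+(r:ℂ))*x := sub_eq_zero.mp hz
        have habs : ‖γ t‖ = (1+r) * ‖x‖ := by
          rw [heq, norm_mul]
          congr 1
          rw [show ((1:ℂ)+(r:ℂ)) = (((1+r:ℝ)):ℂ) by push_cast; ring, Complex.norm_real, Real.norm_eq_abs,
            abs_of_pos (by linarith)]
        have hle : ‖γ t‖ ≤ ‖x‖ := hxmax t ht
        nlinarith)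
    (fun r _ => congrArg (· - (1+(r:ℂ))*x) hloop)
  have e0 : ((fun (r:ℝ) (t:ℝ) => γ t - (1+(r:ℂ))*x) (0:ℝ)) = (fun t => γ t - x) := by
    funext t
    norm_num
  have e1 : ((fun (r:ℝ) (t:ℝ) => γ t - (1+(r:ℂ))*x) (1:ℝ)) = (fun t => γ t - (2:ℂ)*x) := by
    funext t
    push_cast
    ring
  replace hhom : wind (fun t => γ t - x) = wind (fun t => γ t - (2:ℂ)*x) := by rw [← e0, ← e1]; exact hhom
  rw [hhom]
  apply wind_sub_const_of_lt hγ hloop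
  intro t ht
  rw [norm_mul, Complex.norm_two]
  linarith [hxmax t ht]

lemma wind_const_mul {c : ℂ} (hc : c ≠ 0) {g : ℝ → ℂ} (hg : ContinuousOn g (Icc 0 (2*π)))
    (h0 : ∀ t ∈ Icc (0:ℝ) (2*π), g t ≠ 0) :
    wind (fun t => c * g t) = wind g := by
  obtain ⟨ℓ, hℓ⟩ := exists_liftOn twopi_pos.le hg h0
  have h2 : IsLiftOn (fun t => Complex.log c + ℓ t) (fun t => c * g t) (Icc 0 (2*π)) :=
    ⟨continuousOn_const.add hℓ.1, fun t ht => by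
      rw [Complex.exp_add, Complex.exp_log hc, hℓ.2 t ht]⟩
  rw [wind_eq_of_lift h2, wind_eq_of_lift hℓ]
  simp only [Complex.add_im]
  ring
/-- An injective-loop with winding index `n`, `|n| ≥ 2`, is impossible. -/
lemma no_high_winding {n : ℤ} (hn : 2 ≤ |n|) {M : ℝ → ℂ}
    (hM : ContinuousOn M (Icc 0 (2*π)))
    (hper : M (2*π) = M 0 + 2*↑π*I)
    (hinj : ∀ t ∈ Ico (0:ℝ) (2*π), ∀ s ∈ Ico (0:ℝ) (2*π),
      Complex.exp ((n:ℂ) * M t) = Complex.exp ((n:ℂ) * M s) → t = s) : False := by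
  have h0m : (0:ℝ) ∈ Icc (0:ℝ) (2*π) := ⟨le_refl _, twopi_pos.le⟩
  have h2πm : (2*π) ∈ Icc (0:ℝ) (2*π) := ⟨twopi_pos.le, le_refl _⟩
  have hnz : n ≠ 0 := by
    intro h
    rw [h] at hn
    norm_num at hn
  have hn0 : (n:ℝ) ≠ 0 := by exact_mod_cast hnz
  have hn0' : (n:ℂ) ≠ 0 := by exact_mod_cast hnz
  set ρ : ℝ := 2*π/(n:ℝ) with hρdef
  have hnρ : (n:ℝ) * ρ = 2*π := by
    rw [hρdef]
    field_simp
  set ζ : ℂ := Complex.exp ((ρ:ℂ)*I) with hζdef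
  set ξ : ℂ := Complex.exp (((-ρ:ℝ):ℂ)*I) with hξdef
  have hζξ : ζ * ξ = 1 := by
    rw [hζdef, hξdef, ← Complex.exp_add]
    push_cast
    rw [show (ρ:ℂ)*I + -(ρ:ℂ)*I = 0 by ring, Complex.exp_zero]
  have hζabs : ‖ζ‖ = 1 := Complex.norm_exp_ofReal_mul_I ρ
  have hξabs : ‖ξ‖ = 1 := Complex.norm_exp_ofReal_mul_I (-ρ)
  have hζne : ζ ≠ 0 := Complex.exp_ne_zero _
  have Z1 : ζ ≠ 1 := by
    intro h
    obtain ⟨k, hk⟩ := Complex.exp_eq_one_iff.mp h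
    have hI : (ρ:ℂ) = (k:ℂ)*(2*↑π) := by
      apply mul_right_cancel₀ Complex.I_ne_zero
      rw [hk]; ring
    have hρr : ρ = (k:ℝ)*(2*π) := by exact_mod_cast hI
    rw [hρdef] at hρr
    have hπ : (0:ℝ) < π := Real.pi_pos
    have h1 : (1:ℝ) = (k:ℝ)*(n:ℝ) := by
      field_simp at hρr
      nlinarith [hρr]
    have h2 : (1:ℤ) = k*n := by exact_mod_cast h1
    have h3 : n = 1 ∨ n = -1 := Int.isUnit_iff.mp (IsUnit.of_mul_eq_one k (by linarith))
    rcases h3 with h3 | h3 <;> rw [h3] at hn <;> norm_num at hn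
  set γ : ℝ → ℂ := fun t => Complex.exp (M t) with hγdef
  have hγc : ContinuousOn γ (Icc 0 (2*π)) := Complex.continuous_exp.comp_continuousOn hM
  have hγne : ∀ t, γ t ≠ 0 := fun t => Complex.exp_ne_zero _
  have hγloop : γ 0 = γ (2*π) := by
    rw [hγdef]
    simp only []
    rw [hper, Complex.exp_add, Complex.exp_two_pi_mul_I, mul_one]
  -- the key dichotomy from injectivity
  have hred : ∀ u ∈ Icc (0:ℝ) (2*π), ∃ u' ∈ Ico (0:ℝ) (2*π),
      Complex.exp ((n:ℂ)*M u') = Complex.exp ((n:ℂ)*M u) ∧ γ u' = γ u := by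
    intro u hu
    rcases lt_or_eq_of_le hu.2 with h | h
    · exact ⟨u, ⟨hu.1, h⟩, rfl, rfl⟩
    · refine ⟨0, ⟨le_refl _, twopi_pos⟩, ?_, ?_⟩
      · rw [h, hper]
        rw [show (n:ℂ)*(M 0 + 2*↑π*I) = (n:ℂ)*M 0 + ((n:ℤ):ℂ)*(2*↑π*I) by push_cast; ring,
          Complex.exp_add, Complex.exp_int_mul_two_pi_mul_I, mul_one]
      · rw [h]; exact hγloop
  have Z2 : ∀ t ∈ Icc (0:ℝ) (2*π), ∀ s ∈ Icc (0:ℝ) (2*π), γ t ≠ ζ * γ s := by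
    intro t ht s hs heq
    have e1 : Complex.exp ((n:ℂ)*((ρ:ℂ)*I)) = 1 := by
      rw [show (n:ℂ)*((ρ:ℂ)*I) = (((n:ℝ)*ρ:ℝ):ℂ)*I by push_cast; ring, hnρ]
      rw [show ((2*π:ℝ):ℂ)*I = 2*↑π*I by push_cast; ring]
      exact Complex.exp_two_pi_mul_I
    have hstep : Complex.exp ((n:ℂ)*M t) = Complex.exp ((n:ℂ)*M s) := by
      have h1 : Complex.exp (M t) = Complex.exp ((ρ:ℂ)*I + M s) := by
        rw [Complex.exp_add, ← hζdef]
        exact heq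
      obtain ⟨k, hk⟩ := Complex.exp_eq_exp_iff_exists_int.mp h1
      rw [hk]
      have e2 : Complex.exp ((n:ℂ)*((k:ℂ)*(2*↑π*I))) = 1 := by
        rw [show (n:ℂ)*((k:ℂ)*(2*↑π*I)) = ((n*k:ℤ):ℂ)*(2*↑π*I) by push_cast; ring]
        exact Complex.exp_int_mul_two_pi_mul_I _
      rw [show (n:ℂ)*((ρ:ℂ)*I + M s + (k:ℂ)*(2*↑π*I)) =
        (n:ℂ)*M s + (n:ℂ)*((ρ:ℂ)*I) + (n:ℂ)*((k:ℂ)*(2*↑π*I)) by ring,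
        Complex.exp_add, Complex.exp_add, e1, e2, mul_one, mul_one]
    obtain ⟨t', ht', het, hgt⟩ := hred t ht
    obtain ⟨s', hs', hes, hgs⟩ := hred s hs
    have hts : t' = s' := hinj t' ht' s' hs' (by rw [het, hes]; exact hstep)
    have hγeq : γ t = γ s := by rw [← hgt, ← hgs, hts]
    rw [hγeq] at heq
    have : (1:ℂ) * γ s = ζ * γ s := by rw [one_mul]; exact heq
    exact Z1 (mul_right_cancel₀ (hγne s) this).symm
  -- maximum point of |γ|
  obtain ⟨t₀, ht₀, hmax⟩ := isCompact_Icc.exists_isMaxOn ⟨0, h0m⟩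
    (continuous_norm.comp_continuousOn hγc)
  -- diagonal winding is 1
  have hπ : (0:ℝ) < π := Real.pi_pos
  have hΔ : wind (fun t => γ t - ζ * γ t) = 1 := by
    have hl : IsLiftOn (fun t => Complex.log (1 - ζ) + M t) (fun t => γ t - ζ*γ t)
        (Icc 0 (2*π)) := by
      constructor
      · exact continuousOn_const.add hM
      · intro t ht
        rw [Complex.exp_add, Complex.exp_log (sub_ne_zero.mpr (Ne.symm Z1)), hγdef]
        simp only []
        ring
    rw [wind_eq_of_lift hl, hper]
    simp only [Complex.add_im]
    have h2 : ((2:ℂ)*(π:ℝ)*I).im = 2*π := by simp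
    rw [h2]
    field_simp
    ring
  -- staircase homotopy: diagonal ≃ bottom-then-right
  set Λ : ℝ → ℂ := fun t => γ (min (2*t) (2*π)) - ζ * γ (max 0 (2*t - 2*π)) with hΛdef
  have hstair : wind (fun t => γ t - ζ * γ t) = wind Λ := by
    have inr1 : ∀ r ∈ Icc (0:ℝ) 1, ∀ t ∈ Icc (0:ℝ) (2*π),
        (1-r)*t + r*(min (2*t) (2*π)) ∈ Icc (0:ℝ) (2*π) := by
      intro r hr t ht
      have hmin1 : (0:ℝ) ≤ min (2*t) (2*π) := le_min (by linarith [ht.1]) twopi_pos.le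
      have hmin2 : min (2*t) (2*π) ≤ 2*π := min_le_right _ _
      constructor
      · have h1 : 0 ≤ (1-r)*t := mul_nonneg (by linarith [hr.2]) ht.1
        have h2 : 0 ≤ r*(min (2*t) (2*π)) := mul_nonneg hr.1 hmin1
        linarith
      · nlinarith [hr.1, hr.2, ht.1, ht.2]
    have inr2 : ∀ r ∈ Icc (0:ℝ) 1, ∀ t ∈ Icc (0:ℝ) (2*π),
        (1-r)*t + r*(max 0 (2*t - 2*π)) ∈ Icc (0:ℝ) (2*π) := by
      intro r hr t ht
      have hmax1 : (0:ℝ) ≤ max 0 (2*t - 2*π) := le_max_left _ _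
      have hmax2 : max 0 (2*t - 2*π) ≤ 2*π := max_le twopi_pos.le (by linarith [ht.2])
      constructor
      · have h1 : 0 ≤ (1-r)*t := mul_nonneg (by linarith [hr.2]) ht.1
        have h2 : 0 ≤ r*(max 0 (2*t - 2*π)) := mul_nonneg hr.1 hmax1
        linarith
      · nlinarith [hr.1, hr.2, ht.1, ht.2]
    have hcont1 : Continuous (fun p : ℝ × ℝ => (1-p.1)*p.2 + p.1*(min (2*p.2) (2*π))) := by
      apply Continuous.add
      · exact (continuous_const.sub continuous_fst).mul continuous_snd
      · exact continuous_fst.mul ((continuous_const.mul continuous_snd).min continuous_const)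
    have hcont2 : Continuous (fun p : ℝ × ℝ => (1-p.1)*p.2 + p.1*(max 0 (2*p.2 - 2*π))) := by
      apply Continuous.add
      · exact (continuous_const.sub continuous_fst).mul continuous_snd
      · exact continuous_fst.mul (continuous_const.max
          ((continuous_const.mul continuous_snd).sub continuous_const))
    have hhom := wind_const_of_homotopy (zero_le_one (α := ℝ))
      (H := fun r t => γ ((1-r)*t + r*(min (2*t) (2*π))) - ζ * γ ((1-r)*t + r*(max 0 (2*t - 2*π))))
      (by
        apply ContinuousOn.sub
        · exact hγc.comp hcont1.continuousOn
            (fun p hp => inr1 p.1 (Set.mem_prod.mp hp).1 p.2 (Set.mem_prod.mp hp).2)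
        · apply ContinuousOn.mul continuousOn_const
          exact hγc.comp hcont2.continuousOn
            (fun p hp => inr2 p.1 (Set.mem_prod.mp hp).1 p.2 (Set.mem_prod.mp hp).2))
      (by
        intro r hr t ht
        exact sub_ne_zero.mpr (Z2 _ (inr1 r hr t ht) _ (inr2 r hr t ht)))
      (by
        intro r hr
        show γ ((1-r)*0 + r*(min (2*0) (2*π))) - ζ * γ ((1-r)*0 + r*(max 0 (2*0 - 2*π))) =
          γ ((1-r)*(2*π) + r*(min (2*(2*π)) (2*π))) - ζ * γ ((1-r)*(2*π) + r*(max 0 (2*(2*π) - 2*π)))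
        have e1 : (1-r)*(0:ℝ) + r*(min (2*0) (2*π)) = 0 := by
          rw [show (2:ℝ)*0 = 0 by ring, min_eq_left twopi_pos.le]
          ring
        have e2 : (1-r)*(0:ℝ) + r*(max 0 (2*0 - 2*π)) = 0 := by
          rw [show (2:ℝ)*0 - 2*π = -(2*π) by ring, max_eq_left (by linarith [twopi_pos])]
          ring
        have e3 : (1-r)*(2*π) + r*(min (2*(2*π)) (2*π)) = 2*π := by
          rw [min_eq_right (by linarith [twopi_pos])]
          ring
        have e4 : (1-r)*(2*π) + r*(max 0 (2*(2*π) - 2*π)) = 2*π := by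
          rw [show (2:ℝ)*(2*π) - 2*π = 2*π by ring, max_eq_right twopi_pos.le]
          ring
        rw [e1, e2, e3, e4, hγloop])
    have he0 : (fun t => γ ((1-(0:ℝ))*t + 0*(min (2*t) (2*π))) -
        ζ * γ ((1-(0:ℝ))*t + 0*(max 0 (2*t - 2*π)))) = (fun t => γ t - ζ * γ t) := by
      funext t
      norm_num
    have he1 : (fun t => γ ((1-(1:ℝ))*t + 1*(min (2*t) (2*π))) -
        ζ * γ ((1-(1:ℝ))*t + 1*(max 0 (2*t - 2*π)))) = Λ := by
      funext t
      rw [hΛdef]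
      norm_num
    rw [← he0, ← he1]
    exact hhom
  -- split the staircase loop
  set col : ℝ → ℂ := fun t => γ t - ζ * γ 0 with hcoldef
  set rowE : ℝ → ℂ := fun s => γ (2*π) - ζ * γ s with hrowdef
  have hcolc : ContinuousOn col (Icc 0 (2*π)) := hγc.sub continuousOn_const
  have hcolne : ∀ t ∈ Icc (0:ℝ) (2*π), col t ≠ 0 := fun t ht =>
    sub_ne_zero.mpr (Z2 t ht 0 h0m)
  have hrowc : ContinuousOn rowE (Icc 0 (2*π)) :=
    continuousOn_const.sub (continuousOn_const.mul hγc)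
  have hrowne : ∀ s ∈ Icc (0:ℝ) (2*π), rowE s ≠ 0 := fun s hs =>
    sub_ne_zero.mpr (Z2 (2*π) h2πm s hs)
  obtain ⟨ℓA, hℓA⟩ := exists_liftOn twopi_pos.le hcolc hcolne
  obtain ⟨ℓB, hℓB⟩ := exists_liftOn twopi_pos.le hrowc hrowne
  have hsplit : wind Λ = wind col + wind rowE := by
    have hl : IsLiftOn (fun t => if t ≤ π then ℓA (2*t) else ℓB (2*t - 2*π) + (ℓA (2*π) - ℓB 0))
        Λ (Icc 0 (2*π)) := by
      constructor
      · apply glue1D hπ.le (by linarith)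
        · apply hℓA.1.comp (continuous_const.mul continuous_id).continuousOn
          intro t ht
          simp only [Pi.mul_apply, id_eq, Set.mem_Icc] at ht ⊢
          exact ⟨by linarith [ht.1], by linarith [ht.2]⟩
        · apply ContinuousOn.add ?_ continuousOn_const
          apply hℓB.1.comp ((continuous_const.mul continuous_id).sub continuous_const).continuousOn
          intro t ht
          simp only [Pi.sub_apply, Pi.mul_apply, id_eq, Set.mem_Icc] at ht ⊢
          exact ⟨by linarith [ht.1], by linarith [ht.2]⟩
        · have : ℓB (2*π - 2*π) = ℓB 0 := by norm_num
          rw [this]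
          ring
      · intro t ht
        by_cases h : t ≤ π
        · simp only [if_pos h]
          rw [hℓA.2 (2*t) ⟨by linarith [ht.1], by linarith⟩, hΛdef, hcoldef]
          simp only []
          rw [min_eq_left (by linarith), max_eq_left (by linarith)]
        · simp only [if_neg h]
          push_neg at h
          have hm : 2*t - 2*π ∈ Icc (0:ℝ) (2*π) := ⟨by linarith, by linarith [ht.2]⟩
          rw [Complex.exp_add, Complex.exp_sub, hℓB.2 _ hm, hℓA.2 (2*π) h2πm,
            hℓB.2 0 h0m, hΛdef, hcoldef, hrowdef]
          simp only []
          rw [min_eq_right (by linarith), max_eq_right (by linarith)]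
          rw [div_self (sub_ne_zero.mpr (Z2 (2*π) h2πm 0 h0m)), mul_one]
    rw [wind_eq_of_lift hl, wind_eq_of_lift hℓA, wind_eq_of_lift hℓB]
    rw [if_neg (by linarith : ¬ (2*π ≤ π)), if_pos hπ.le]
    rw [show (2:ℝ)*(2*π) - 2*π = 2*π by ring, show (2:ℝ)*0 = 0 by ring]
    simp only [Complex.add_im, Complex.sub_im]
    ring
  -- the column loop has winding 0
  have hcol0 : wind col = 0 := by
    have hc1 : wind col = wind (fun t => γ t - ζ * γ t₀) := by
      have := wind_const_of_homotopy (ht₀.1 : (0:ℝ) ≤ t₀)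
        (H := fun s t => γ t - ζ * γ s)
        (by
          apply ContinuousOn.sub
          · exact hγc.comp continuous_snd.continuousOn
              (fun p hp => (Set.mem_prod.mp hp).2)
          · apply ContinuousOn.mul continuousOn_const
            apply hγc.comp continuous_fst.continuousOn
            intro p hp
            have h1 := (Set.mem_prod.mp hp).1
            exact ⟨h1.1, le_trans h1.2 ht₀.2⟩)
        (by
          intro s hs t ht
          exact sub_ne_zero.mpr (Z2 t ht s ⟨hs.1, le_trans hs.2 ht₀.2⟩))
        (by
          intro s hs
          show γ 0 - ζ * γ s = γ (2*π) - ζ * γ s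
          rw [hγloop])
      rw [hcoldef]
      exact this
    rw [hc1]
    apply wind_sub_const_eq_zero hγc hγloop
    · intro t ht
      exact Z2 t ht t₀ ht₀
    · intro t ht
      rw [norm_mul, hζabs, one_mul]
      exact hmax ht
  -- the row loop has winding 0
  have hrow0 : wind rowE = 0 := by
    have hgne : ∀ s ∈ Icc (0:ℝ) (2*π), ∀ u ∈ Icc (0:ℝ) (2*π), γ s - ξ * γ u ≠ 0 := by
      intro s hs u hu h
      have heq : γ s = ξ * γ u := sub_eq_zero.mp h
      have : ζ * γ s = γ u := by
        rw [heq, ← mul_assoc, hζξ, one_mul]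
      exact Z2 u hu s hs this.symm
    have hr1 : rowE = fun s => (-ζ) * (γ s - ξ * γ (2*π)) := by
      funext s
      show γ (2*π) - ζ * γ s = (-ζ) * (γ s - ξ * γ (2*π))
      linear_combination (-(γ (2*π))) * hζξ
    have hr2 : wind rowE = wind (fun s => γ s - ξ * γ (2*π)) := by
      rw [hr1]
      apply wind_const_mul (neg_ne_zero.mpr hζne)
        (hγc.sub continuousOn_const)
        (fun s hs => hgne s hs (2*π) h2πm)
    have hr3 : wind (fun s => γ s - ξ * γ (2*π)) = wind (fun s => γ s - ξ * γ t₀) := by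
      have := wind_const_of_homotopy (ht₀.2 : t₀ ≤ 2*π)
        (H := fun u s => γ s - ξ * γ u)
        (by
          apply ContinuousOn.sub
          · exact hγc.comp continuous_snd.continuousOn
              (fun p hp => (Set.mem_prod.mp hp).2)
          · apply ContinuousOn.mul continuousOn_const
            apply hγc.comp continuous_fst.continuousOn
            intro p hp
            have h1 := (Set.mem_prod.mp hp).1
            exact ⟨le_trans ht₀.1 h1.1, h1.2⟩)
        (by
          intro u hu s hs
          exact hgne s hs u ⟨le_trans ht₀.1 hu.1, hu.2⟩)
        (by
          intro u hu
          show γ 0 - ξ * γ u = γ (2*π) - ξ * γ u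
          rw [hγloop])
      exact this.symm
    rw [hr2, hr3]
    apply wind_sub_const_eq_zero hγc hγloop
    · intro s hs h
      exact hgne s hs t₀ ht₀ (sub_eq_zero.mpr h)
    · intro s hs
      rw [norm_mul, hξabs, one_mul]
      exact hmax hs
  rw [hstair, hsplit, hcol0, hrow0] at hΔ
  norm_num at hΔ
lemma floor_twopi_eq {y : ℝ} {k : ℤ} (h1 : 2*π*k ≤ y) (h2 : y < 2*π*(k+1)) :
    ⌊y/(2*π)⌋ = k := by
  rw [Int.floor_eq_iff]
  constructor
  · rw [le_div_iff₀ twopi_pos]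
    linarith
  · rw [div_lt_iff₀ twopi_pos]
    push_cast
    linarith

lemma self_sub_floor_mem (y : ℝ) : y - 2*π*⌊y/(2*π)⌋ ∈ Ico 0 (2*π) := by
  have h1 := Int.floor_le (y/(2*π))
  have h2 := Int.lt_floor_add_one (y/(2*π))
  rw [le_div_iff₀ twopi_pos] at h1
  rw [div_lt_iff₀ twopi_pos] at h2
  constructor
  · linarith
  · linarith

lemma floor_twopi_add_le {y δ : ℝ} (h : |δ| ≤ 2*π) :
    |(⌊(y+δ)/(2*π)⌋ - ⌊y/(2*π)⌋ : ℤ)| ≤ 1 := by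
  have habs := abs_le.mp h
  have h1 : ⌊(y+δ)/(2*π)⌋ ≤ ⌊y/(2*π)⌋ + 1 := by
    have : (y+δ)/(2*π) ≤ y/(2*π) + 1 := by
      rw [div_add' _ _ _ (ne_of_gt twopi_pos), div_le_div_iff_of_pos_right twopi_pos]
      linarith
    calc ⌊(y+δ)/(2*π)⌋ ≤ ⌊y/(2*π) + 1⌋ := Int.floor_le_floor this
      _ = ⌊y/(2*π)⌋ + 1 := by rw [Int.floor_add_one]
  have h2 : ⌊y/(2*π)⌋ - 1 ≤ ⌊(y+δ)/(2*π)⌋ := by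
    have : y/(2*π) - 1 ≤ (y+δ)/(2*π) := by
      rw [div_sub' (ne_of_gt twopi_pos), div_le_div_iff_of_pos_right twopi_pos]
      linarith
    have h3 : ⌊y/(2*π) - 1⌋ ≤ ⌊(y+δ)/(2*π)⌋ := Int.floor_le_floor this
    rwa [Int.floor_sub_one] at h3
  rw [abs_le]
  omega

/-- Continuity of the glued extension of the argument lift. -/
lemma theta_ext_cont {q : ℝ} (hq0 : 0 < q) (hq1 : q < 1) (θ : ℝ × ℝ → ℝ) (nn : ℤ)
    (hcont : ContinuousOn θ (Icc q 1 ×ˢ Icc 0 (2*π)))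
    (hper : ∀ v ∈ Icc q 1, θ (v, 2*π) - θ (v, 0) = 2*π*nn) :
    ContinuousOn (fun p : ℝ × ℝ => θ (Real.exp p.1, p.2 - 2*π*⌊p.2/(2*π)⌋) + 2*π*nn*⌊p.2/(2*π)⌋)
      (Icc (Real.log q) 0 ×ˢ (univ : Set ℝ)) := by
  set a := Real.log q with hadef
  have hea : Real.exp a = q := Real.exp_log hq0
  have hexpmem : ∀ x ∈ Icc a 0, Real.exp x ∈ Icc q 1 := by
    intro x hx
    constructor
    · rw [← hea]; exact Real.exp_le_exp.mpr hx.1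
    · rw [← Real.exp_zero]; exact Real.exp_le_exp.mpr hx.2
  set Θ : ℝ × ℝ → ℝ :=
    fun p => θ (Real.exp p.1, p.2 - 2*π*⌊p.2/(2*π)⌋) + 2*π*nn*⌊p.2/(2*π)⌋ with hΘdef
  -- slab congruence and continuity, with real-cast slab bounds
  have hslabcont : ∀ c : ℝ, (∃ k : ℤ, (k:ℝ) = c) →
      ContinuousOn Θ (Icc a 0 ×ˢ Icc (2*π*c) (2*π*(c+1))) := by
    rintro c ⟨k, rfl⟩
    have hslab : ∀ p ∈ Icc a 0 ×ˢ Icc (2*π*(k:ℝ)) (2*π*((k:ℝ)+1)),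
        Θ p = θ (Real.exp p.1, p.2 - 2*π*(k:ℝ)) + 2*π*(nn:ℝ)*(k:ℝ) := by
      intro p hp
      obtain ⟨hp1, hp2⟩ := Set.mem_prod.mp hp
      rcases lt_or_eq_of_le hp2.2 with h | h
      · have hfl : ⌊p.2/(2*π)⌋ = k := floor_twopi_eq hp2.1 (by push_cast; exact h)
        rw [hΘdef]
        simp only []
        rw [hfl]
      · have hfl : ⌊p.2/(2*π)⌋ = k+1 := by
          apply floor_twopi_eq
          · push_cast
            rw [h]
          · push_cast
            rw [h]
            nlinarith [Real.pi_pos]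
        rw [hΘdef]
        simp only []
        rw [hfl, h]
        have hv := hper (Real.exp p.1) (hexpmem p.1 hp1)
        push_cast
        rw [show 2 * π * ((k:ℝ) + 1) - 2 * π * ((k:ℝ) + 1) = 0 by ring]
        rw [show 2 * π * ((k:ℝ) + 1) - 2 * π * (k:ℝ) = 2*π by ring]
        linarith [hv]
    apply ContinuousOn.congr (f := fun p : ℝ × ℝ => θ (Real.exp p.1, p.2 - 2*π*(k:ℝ)) + 2*π*(nn:ℝ)*(k:ℝ))
    · apply ContinuousOn.add ?_ continuousOn_const
      apply hcont.comp
      · apply Continuous.continuousOn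
        exact ((Real.continuous_exp.comp continuous_fst).prodMk
          (continuous_snd.sub continuous_const))
      · intro p hp
        obtain ⟨hp1, hp2⟩ := Set.mem_prod.mp hp
        refine Set.mk_mem_prod (hexpmem p.1 hp1) ⟨?_, ?_⟩
        · show (0:ℝ) ≤ p.2 - 2*π*(k:ℝ)
          linarith [hp2.1]
        · show p.2 - 2*π*(k:ℝ) ≤ 2*π
          linarith [hp2.2]
    · exact hslab
  -- gluing
  intro p hp
  obtain ⟨hp1, _⟩ := Set.mem_prod.mp hp
  set k : ℤ := ⌊p.2/(2*π)⌋ with hkdef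
  have hk1 : 2*π*(k:ℝ) ≤ p.2 ∧ p.2 < 2*π*((k:ℝ)+1) := by
    have h1 := Int.floor_le (p.2/(2*π))
    have h2 := Int.lt_floor_add_one (p.2/(2*π))
    rw [le_div_iff₀ twopi_pos] at h1
    rw [div_lt_iff₀ twopi_pos] at h2
    exact ⟨by linarith, by linarith⟩
  set A : Set (ℝ × ℝ) := Icc a 0 ×ˢ Icc (2*π*((k:ℝ)-1)) (2*π*(((k:ℝ)-1)+1)) with hAdef
  set B : Set (ℝ × ℝ) := Icc a 0 ×ˢ Icc (2*π*(k:ℝ)) (2*π*((k:ℝ)+1)) with hBdef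
  have hpB : p ∈ B := Set.mk_mem_prod hp1 ⟨hk1.1, hk1.2.le⟩
  have hclA : IsClosed A := isClosed_Icc.prod isClosed_Icc
  have hcwaA : ContinuousWithinAt Θ A p := by
    by_cases hmem : p ∈ A
    · exact (hslabcont ((k:ℝ)-1) ⟨k-1, by push_cast; ring⟩).continuousWithinAt hmem
    · apply continuousWithinAt_of_notMem_closure
      rwa [hclA.closure_eq]
  have hcwaB : ContinuousWithinAt Θ B p :=
    (hslabcont (k:ℝ) ⟨k, rfl⟩).continuousWithinAt hpB
  have hunion : ContinuousWithinAt Θ (A ∪ B) p := hcwaA.union hcwaB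
  apply hunion.mono_of_mem_nhdsWithin
  have hV : (univ ×ˢ Ioo (2*π*((k:ℝ)-1)) (2*π*((k:ℝ)+1)) : Set (ℝ × ℝ)) ∈ nhds p := by
    apply IsOpen.mem_nhds (isOpen_univ.prod isOpen_Ioo)
    refine Set.mk_mem_prod (Set.mem_univ _) ⟨?_, ?_⟩
    · have h := hk1.1
      nlinarith [Real.pi_pos]
    · exact hk1.2
  have hsub : (Icc a 0 ×ˢ (univ : Set ℝ)) ∩ (univ ×ˢ Ioo (2*π*((k:ℝ)-1)) (2*π*((k:ℝ)+1)))
      ⊆ A ∪ B := by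
    rintro ⟨x, y⟩ ⟨hxy1, hxy2⟩
    obtain ⟨hx, _⟩ := Set.mem_prod.mp hxy1
    obtain ⟨_, hy⟩ := Set.mem_prod.mp hxy2
    rcases le_total y (2*π*(k:ℝ)) with h | h
    · exact Or.inl (Set.mk_mem_prod hx ⟨hy.1.le, by linarith⟩)
    · exact Or.inr (Set.mk_mem_prod hx ⟨h, hy.2.le⟩)
  exact Filter.mem_of_superset (inter_mem_nhdsWithin _ hV) hsub
/-- Existence of the winding integer of the lift, with the degree bound from injectivity. -/
lemma exists_winding_int (q : ℝ) (hq : q ∈ Set.Ioo (0 : ℝ) 1)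
    (φ φbar : ℂ → ℂ)
    (hinj : Set.InjOn φ {z : ℂ | q < ‖z‖ ∧ ‖z‖ < 1})
    (hext : ContinuousOn φbar {z : ℂ | q ≤ ‖z‖ ∧ ‖z‖ ≤ 1})
    (heq : Set.EqOn φbar φ {z : ℂ | q < ‖z‖ ∧ ‖z‖ < 1})
    (h0 : (0 : ℂ) ∉ φbar '' {z : ℂ | q ≤ ‖z‖ ∧ ‖z‖ ≤ 1})
    (thetaLift : ℝ × ℝ → ℝ)
    (hliftcont : ContinuousOn thetaLift (Set.Icc q 1 ×ˢ Set.Icc 0 (2 * π)))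
    (hlift : ∀ u ∈ Set.Icc q 1, ∀ t ∈ Set.Icc 0 (2 * π),
      Complex.exp ((thetaLift (u, t) : ℂ) * Complex.I) =
        φbar ((u : ℂ) * Complex.exp ((t : ℂ) * Complex.I)) /
          (↑(‖φbar ((u : ℂ) * Complex.exp ((t : ℂ) * Complex.I))‖) : ℂ)) :
    ∃ nn : ℤ, |nn| ≤ 1 ∧
      ∀ v ∈ Set.Icc q 1, thetaLift (v, 2*π) - thetaLift (v, 0) = 2*π*nn := by
  obtain ⟨hq0, hq1⟩ := hq
  have h2πm : (2*π) ∈ Icc (0:ℝ) (2*π) := ⟨twopi_pos.le, le_refl _⟩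
  have h0m : (0:ℝ) ∈ Icc (0:ℝ) (2*π) := ⟨le_refl _, twopi_pos.le⟩
  have hφne : ∀ z : ℂ, q ≤ ‖z‖ → ‖z‖ ≤ 1 → φbar z ≠ 0 := by
    intro z h1 h2 h
    exact h0 ⟨z, ⟨h1, h2⟩, h⟩
  have habs_pt : ∀ v : ℝ, 0 ≤ v → ∀ t : ℝ,
      ‖(v:ℂ) * Complex.exp ((t:ℂ)*I)‖ = v := by
    intro v hv t
    rw [norm_mul, Complex.norm_real, Real.norm_eq_abs, _root_.abs_of_nonneg hv]
    rw [show ((t:ℂ)) = ((t:ℝ):ℂ) by norm_num, Complex.norm_exp_ofReal_mul_I, mul_one]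
  -- Part A: the increment is a constant integer multiple of 2π
  have hpt : ∀ v ∈ Icc q 1, ∃ m : ℤ, thetaLift (v, 2*π) - thetaLift (v, 0) = 2*π*m := by
    intro v hv
    have h1 := hlift v hv (2*π) h2πm
    have h2 := hlift v hv 0 h0m
    have harg : ((2*π:ℝ):ℂ)*I = 2*(π:ℝ)*I := by push_cast; ring
    have hpteq : (v:ℂ) * Complex.exp (((2*π:ℝ):ℂ)*I) = (v:ℂ) * Complex.exp (((0:ℝ):ℂ)*I) := by
      rw [harg, Complex.exp_two_pi_mul_I]
      norm_num
    rw [hpteq] at h1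
    have hee : Complex.exp ((thetaLift (v, 2*π) : ℂ) * I) =
        Complex.exp ((thetaLift (v, 0) : ℂ) * I) := by
      rw [h1, h2]
    obtain ⟨m, hm⟩ := Complex.exp_eq_exp_iff_exists_int.mp hee
    refine ⟨m, ?_⟩
    have hI : ((thetaLift (v, 2*π) : ℂ)) * I = ((thetaLift (v, 0) : ℝ) + 2*π*m : ℝ) * I := by
      rw [hm]
      push_cast
      ring
    have := mul_right_cancel₀ Complex.I_ne_zero hI
    have hr : thetaLift (v, 2*π) = thetaLift (v, 0) + 2*π*m := by exact_mod_cast this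
    linarith
  have hcont2 : ContinuousOn (fun v => (thetaLift (v, 2*π) - thetaLift (v, 0))/(2*π))
      (Icc q 1) := by
    apply ContinuousOn.div_const
    apply ContinuousOn.sub
    · exact hliftcont.comp ((continuous_id.prodMk continuous_const).continuousOn)
        (fun v hv => Set.mk_mem_prod hv h2πm)
    · exact hliftcont.comp ((continuous_id.prodMk continuous_const).continuousOn)
        (fun v hv => Set.mk_mem_prod hv h0m)
  have hqm : q ∈ Icc q 1 := ⟨le_refl q, hq1.le⟩
  obtain ⟨nn, hnnq⟩ := hpt q hqm
  have hnn : ∀ v ∈ Icc q 1, thetaLift (v, 2*π) - thetaLift (v, 0) = 2*π*nn := by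
    intro v hv
    have hiv : ∀ w ∈ Icc q 1, ∃ m : ℤ,
        (thetaLift (w, 2*π) - thetaLift (w, 0))/(2*π) = m := by
      intro w hw
      obtain ⟨m, hm⟩ := hpt w hw
      refine ⟨m, ?_⟩
      rw [hm]
      field_simp
    have := intval_const isPreconnected_Icc hcont2 hiv hv hqm
    rw [hnnq] at this
    have h2 : (2*π*nn)/(2*π) = (nn:ℝ) := by field_simp
    rw [h2] at this
    field_simp at this
    linarith [this]
  refine ⟨nn, ?_, hnn⟩
  -- Part B : |nn| ≤ 1 via the winding degree argument
  by_contra hcon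
  push_neg at hcon
  have hn2 : 2 ≤ |nn| := hcon
  have hnz : nn ≠ 0 := by
    intro h
    rw [h] at hn2
    norm_num at hn2
  have hnc : (nn:ℂ) ≠ 0 := by exact_mod_cast hnz
  set u₀ : ℝ := (q+1)/2 with hu₀def
  have hu₀q : q < u₀ := by rw [hu₀def]; linarith
  have hu₀1 : u₀ < 1 := by rw [hu₀def]; linarith
  have hu₀0 : 0 < u₀ := by linarith
  have hu₀m : u₀ ∈ Icc q 1 := ⟨hu₀q.le, hu₀1.le⟩
  set c : ℝ → ℂ := fun t => (u₀:ℂ) * Complex.exp ((t:ℂ)*I) with hcdef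
  have hcabs : ∀ t, ‖c t‖ = u₀ := fun t => habs_pt u₀ hu₀0.le t
  have hcmem : ∀ t, c t ∈ {z : ℂ | q ≤ ‖z‖ ∧ ‖z‖ ≤ 1} := by
    intro t
    rw [Set.mem_setOf_eq, hcabs t]
    exact ⟨hu₀q.le, hu₀1.le⟩
  have hcmemo : ∀ t, c t ∈ {z : ℂ | q < ‖z‖ ∧ ‖z‖ < 1} := by
    intro t
    rw [Set.mem_setOf_eq, hcabs t]
    exact ⟨hu₀q, hu₀1⟩
  have hφcne : ∀ t, φbar (c t) ≠ 0 := fun t =>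
    hφne (c t) (by rw [hcabs t]; exact hu₀q.le) (by rw [hcabs t]; exact hu₀1.le)
  set M : ℝ → ℂ := fun t =>
    ((nn:ℂ))⁻¹ * (↑(Real.log (‖φbar (c t)‖)) + ↑(thetaLift (u₀, t)) * I) with hMdef
  have hexpM : ∀ t ∈ Icc (0:ℝ) (2*π), Complex.exp ((nn:ℂ) * M t) = φbar (c t) := by
    intro t ht
    rw [hMdef]
    simp only []
    rw [← mul_assoc, mul_inv_cancel₀ hnc, one_mul, Complex.exp_add]
    rw [← Complex.ofReal_exp, Real.exp_log (norm_pos_iff.mpr (hφcne t))]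
    rw [hlift u₀ hu₀m t ht]
    have hane : ((‖φbar ((u₀:ℂ) * Complex.exp ((t:ℂ)*I))‖) : ℂ) ≠ 0 := by
      exact_mod_cast norm_ne_zero_iff.mpr (hφcne t)
    rw [mul_comm, div_mul_cancel₀ _ hane]
  have hMcont : ContinuousOn M (Icc 0 (2*π)) := by
    apply ContinuousOn.mul continuousOn_const
    apply ContinuousOn.add
    · apply Complex.continuous_ofReal.comp_continuousOn
      apply Real.continuousOn_log.comp
      · apply continuous_norm.comp_continuousOn
        apply hext.comp ?_ (fun t _ => hcmem t)
        apply Continuous.continuousOn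
        exact continuous_const.mul (Complex.continuous_exp.comp
          (Complex.continuous_ofReal.mul continuous_const))
      · intro t _
        exact norm_ne_zero_iff.mpr (hφcne t)
    · apply ContinuousOn.mul ?_ continuousOn_const
      apply Complex.continuous_ofReal.comp_continuousOn
      exact hliftcont.comp ((continuous_const.prodMk continuous_id).continuousOn)
        (fun t ht => Set.mk_mem_prod hu₀m ht)
  have hMper : M (2*π) = M 0 + 2*↑π*I := by
    rw [hMdef]
    simp only []
    have hc2π : c (2*π) = c 0 := by
      rw [hcdef]
      simp only []
      rw [show ((2*π:ℝ):ℂ)*I = 2*(π:ℝ)*I by push_cast; ring, Complex.exp_two_pi_mul_I]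
      norm_num
    rw [hc2π]
    have hθ := hnn u₀ hu₀m
    have hθ' : (thetaLift (u₀, 2*π) : ℂ) = (thetaLift (u₀, 0) : ℂ) + 2*↑π*(nn:ℂ) := by
      have : thetaLift (u₀, 2*π) = thetaLift (u₀, 0) + 2*π*(nn:ℝ) := by
        push_cast at hθ ⊢
        linarith
      rw [this]
      push_cast
      ring
    rw [hθ']
    field_simp
    ring
  have hMinj : ∀ t ∈ Ico (0:ℝ) (2*π), ∀ s ∈ Ico (0:ℝ) (2*π),
      Complex.exp ((nn:ℂ) * M t) = Complex.exp ((nn:ℂ) * M s) → t = s := by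
    intro t ht s hs hee
    rw [hexpM t ⟨ht.1, ht.2.le⟩, hexpM s ⟨hs.1, hs.2.le⟩] at hee
    have hφeq : φ (c t) = φ (c s) := by
      rw [← heq (hcmemo t), ← heq (hcmemo s)]
      exact hee
    have hceq : c t = c s := hinj (hcmemo t) (hcmemo s) hφeq
    rw [hcdef] at hceq
    simp only [] at hceq
    have hu₀ne : (u₀:ℂ) ≠ 0 := by exact_mod_cast hu₀0.ne'
    have hexpe : Complex.exp ((t:ℂ)*I) = Complex.exp ((s:ℂ)*I) :=
      mul_left_cancel₀ hu₀ne hceq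
    obtain ⟨m, hm⟩ := Complex.exp_eq_exp_iff_exists_int.mp hexpe
    have hI : ((t:ℝ):ℂ) * I = ((s + 2*π*m : ℝ):ℂ) * I := by
      rw [hm]; push_cast; ring
    have := mul_right_cancel₀ Complex.I_ne_zero hI
    have hr : t = s + 2*π*m := by exact_mod_cast this
    have hm0 : m = 0 := by
      by_contra hm0
      have h1 : (1:ℝ) ≤ |(m:ℝ)| := by
        have h1' : (1:ℤ) ≤ |m| := Int.one_le_abs (by omega)
        have h2' : |(m:ℝ)| = ((|m| : ℤ) : ℝ) := by
          rw [Int.cast_abs]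
        rw [h2']
        exact_mod_cast h1'
      have h2 : |t - s| < 2*π := by
        rw [abs_lt]
        constructor
        · linarith [ht.1, hs.2]
        · linarith [ht.2, hs.1]
      rw [hr] at h2
      have h3 : |2*π*m| = 2*π*|(m:ℝ)| := by
        rw [abs_mul]
        congr 1
        rw [abs_of_pos twopi_pos]
      have h4 : |s + 2*π*m - s| = |2*π*m| := by congr 1; ring
      rw [h4, h3] at h2
      nlinarith [twopi_pos]
    rw [hm0] at hr
    push_cast at hr
    linarith
  exact no_high_winding hn2 hMcont hMper hMinj

/-- two continuous logarithms of the same function differ by a constant. -/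
lemma sub_const_of_exp_eq {X : Type*} [TopologicalSpace X] {s : Set X} (hs : IsPreconnected s)
    {f g : X → ℂ} (hf : ContinuousOn f s) (hg : ContinuousOn g s)
    (hexp : ∀ x ∈ s, Complex.exp (f x) = Complex.exp (g x)) {x y : X}
    (hx : x ∈ s) (hy : y ∈ s) : f x - g x = f y - g y := by
  have hpt : ∀ r ∈ s, ∃ m : ℤ, f r - g r = (m:ℂ) * (2 * π * I) := by
    intro r hr
    apply Complex.exp_eq_one_iff.mp
    rw [Complex.exp_sub, hexp r hr, div_self (Complex.exp_ne_zero _)]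
  have him : ∀ r ∈ s, ∃ m : ℤ, (f r - g r).im / (2*π) = m := by
    intro r hr
    obtain ⟨m, hm⟩ := hpt r hr
    refine ⟨m, ?_⟩
    rw [hm]
    have h2 : ((m:ℂ) * (2 * ↑π * I)).im = m * (2*π) := by
      simp [Complex.mul_im, Complex.mul_re]
      try ring
    rw [h2]
    field_simp
  have hcont : ContinuousOn (fun r => (f r - g r).im / (2*π)) s :=
    (Complex.continuous_im.comp_continuousOn (hf.sub hg)).div_const _
  have heq2 : (f x - g x).im / (2*π) = (f y - g y).im / (2*π) :=
    intval_const hs hcont him hx hy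
  have himeq : (f x - g x).im = (f y - g y).im := by
    field_simp at heq2
    exact heq2
  obtain ⟨m₁, hm₁⟩ := hpt x hx
  obtain ⟨m₂, hm₂⟩ := hpt y hy
  have hre : (f x - g x).re = (f y - g y).re := by
    rw [hm₁, hm₂]
    simp [Complex.mul_re]
  exact Complex.ext hre himeq

lemma strip_estimate (q : ℝ) (hq : q ∈ Set.Ioo (0 : ℝ) 1)
    (φ φbar : ℂ → ℂ)
    (hhol : DifferentiableOn ℂ φ {z : ℂ | q < ‖z‖ ∧ ‖z‖ < 1})
    (hext : ContinuousOn φbar {z : ℂ | q ≤ ‖z‖ ∧ ‖z‖ ≤ 1})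
    (heq : Set.EqOn φbar φ {z : ℂ | q < ‖z‖ ∧ ‖z‖ < 1})
    (h0 : (0 : ℂ) ∉ φbar '' {z : ℂ | q ≤ ‖z‖ ∧ ‖z‖ ≤ 1})
    (thetaLift : ℝ × ℝ → ℝ)
    (hliftcont : ContinuousOn thetaLift (Set.Icc q 1 ×ˢ Set.Icc 0 (2 * π)))
    (hlift : ∀ u ∈ Set.Icc q 1, ∀ t ∈ Set.Icc 0 (2 * π),
      Complex.exp ((thetaLift (u, t) : ℂ) * Complex.I) =
        φbar ((u : ℂ) * Complex.exp ((t : ℂ) * Complex.I)) /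
          (↑(‖φbar ((u : ℂ) * Complex.exp ((t : ℂ) * Complex.I))‖) : ℂ))
    (nn : ℤ) (hn1 : |nn| ≤ 1)
    (hnn : ∀ v ∈ Set.Icc q 1, thetaLift (v, 2*π) - thetaLift (v, 0) = 2*π*nn) :
    ∀ u ∈ Set.Icc q 1, ∀ t ∈ Set.Icc 0 (2*π), ∀ s ∈ Set.Icc 0 (2*π),
      thetaLift (u, t) - thetaLift (u, s) ≤
        max (osc thetaLift q) (osc thetaLift 1) + 2*π := by
  obtain ⟨hq0, hq1⟩ := hq
  have hπ : (0:ℝ) < π := Real.pi_pos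
  set a := Real.log q with hadef
  have ha0 : a < 0 := Real.log_neg hq0 hq1
  have hea : Real.exp a = q := Real.exp_log hq0
  have hexpmem : ∀ x ∈ Icc a 0, Real.exp x ∈ Icc q 1 := by
    intro x hx
    constructor
    · rw [← hea]; exact Real.exp_le_exp.mpr hx.1
    · rw [← Real.exp_zero]; exact Real.exp_le_exp.mpr hx.2
  have hφne : ∀ z : ℂ, q ≤ ‖z‖ → ‖z‖ ≤ 1 → φbar z ≠ 0 := by
    intro z h1 h2 h
    exact h0 ⟨z, ⟨h1, h2⟩, h⟩
  set Θ : ℝ × ℝ → ℝ :=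
    fun p => thetaLift (Real.exp p.1, p.2 - 2*π*⌊p.2/(2*π)⌋) + 2*π*nn*⌊p.2/(2*π)⌋ with hΘdef
  have hΘcont : ContinuousOn Θ (Icc a 0 ×ˢ univ) :=
    theta_ext_cont hq0 hq1 thetaLift nn hliftcont hnn
  have hΘred : ∀ x ∈ Icc a 0, ∀ τ ∈ Icc (0:ℝ) (2*π), Θ (x, τ) = thetaLift (Real.exp x, τ) := by
    intro x hx τ hτ
    rcases lt_or_eq_of_le hτ.2 with h | h
    · have hfl : ⌊τ/(2*π)⌋ = 0 :=
        floor_twopi_eq (by push_cast; linarith [hτ.1]) (by push_cast; linarith)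
      show thetaLift (Real.exp x, τ - 2*π*⌊τ/(2*π)⌋) + 2*π*nn*⌊τ/(2*π)⌋ = _
      rw [hfl]
      push_cast
      norm_num
    · have hfl : ⌊τ/(2*π)⌋ = 1 := by
        apply floor_twopi_eq
        · push_cast; linarith [h.symm]
        · push_cast; nlinarith [hπ, h.symm]
      show thetaLift (Real.exp x, τ - 2*π*⌊τ/(2*π)⌋) + 2*π*nn*⌊τ/(2*π)⌋ = _
      rw [hfl, h]
      push_cast
      rw [show (2*π - 2*π*(1:ℝ)) = 0 by ring]
      have := hnn (Real.exp x) (hexpmem x hx)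
      linarith
  set Lbar : ℂ → ℂ := fun w =>
    (↑(Real.log (‖φbar (Complex.exp w)‖)) + ↑(Θ (w.re, w.im)) * I) with hLdef
  have hwmem : ∀ w : ℂ, w.re ∈ Icc a 0 →
      (Complex.exp w) ∈ {z : ℂ | q ≤ ‖z‖ ∧ ‖z‖ ≤ 1} := by
    intro w hw
    rw [Set.mem_setOf_eq, Complex.norm_exp]
    exact ⟨by rw [← hea]; exact Real.exp_le_exp.mpr hw.1,
      by rw [← Real.exp_zero]; exact Real.exp_le_exp.mpr hw.2⟩
  have hwmemo : ∀ w : ℂ, w.re ∈ Ioo a 0 →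
      (Complex.exp w) ∈ {z : ℂ | q < ‖z‖ ∧ ‖z‖ < 1} := by
    intro w hw
    rw [Set.mem_setOf_eq, Complex.norm_exp]
    exact ⟨by rw [← hea]; exact Real.exp_lt_exp.mpr hw.1,
      by rw [← Real.exp_zero]; exact Real.exp_lt_exp.mpr hw.2⟩
  have hφewne : ∀ w : ℂ, w.re ∈ Icc a 0 → φbar (Complex.exp w) ≠ 0 := by
    intro w hw
    have := hwmem w hw
    exact hφne _ this.1 this.2
  have hLexp : ∀ w : ℂ, w.re ∈ Icc a 0 → Complex.exp (Lbar w) = φbar (Complex.exp w) := by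
    intro w hw
    have hτm : w.im - 2*π*⌊w.im/(2*π)⌋ ∈ Ico 0 (2*π) := self_sub_floor_mem w.im
    set k : ℤ := ⌊w.im/(2*π)⌋ with hkdef
    set τ : ℝ := w.im - 2*π*k with hτdef
    have hptsplit : Complex.exp w = ↑(Real.exp w.re) * Complex.exp ((τ:ℂ)*I) := by
      calc Complex.exp w = Complex.exp (↑w.re + ↑w.im*I) := by rw [Complex.re_add_im]
        _ = Complex.exp (↑w.re) * Complex.exp (↑w.im*I) := Complex.exp_add _ _
        _ = Complex.exp (↑w.re) * Complex.exp ((τ:ℂ)*I) := by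
            congr 1
            have he : (w.im:ℂ)*I = (τ:ℂ)*I + (k:ℂ)*(2*↑π*I) := by
              rw [hτdef]; push_cast; ring
            rw [he, Complex.exp_add, Complex.exp_int_mul_two_pi_mul_I, mul_one]
        _ = ↑(Real.exp w.re) * Complex.exp ((τ:ℂ)*I) := by rw [Complex.ofReal_exp]
    have hΘval : Θ (w.re, w.im) = thetaLift (Real.exp w.re, τ) + 2*π*nn*k := rfl
    show Complex.exp (↑(Real.log (‖φbar (Complex.exp w)‖)) + ↑(Θ (w.re, w.im)) * I)
        = φbar (Complex.exp w)
    rw [Complex.exp_add, ← Complex.ofReal_exp,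
      Real.exp_log (norm_pos_iff.mpr (hφewne w hw))]
    have hexpΘ : Complex.exp (↑(Θ (w.re, w.im)) * I) =
        Complex.exp (↑(thetaLift (Real.exp w.re, τ)) * I) := by
      rw [hΘval]
      push_cast
      rw [add_mul, Complex.exp_add]
      rw [show ((2:ℂ)*↑π*(nn:ℂ)*(k:ℂ))*I = ((nn*k : ℤ):ℂ)*(2*↑π*I) by push_cast; ring]
      rw [Complex.exp_int_mul_two_pi_mul_I, mul_one]
    rw [hexpΘ, hlift (Real.exp w.re) (hexpmem _ hw) τ ⟨hτm.1, hτm.2.le⟩, ← hptsplit]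
    have hane : ((‖φbar (Complex.exp w)‖) : ℂ) ≠ 0 := by
      exact_mod_cast norm_ne_zero_iff.mpr (hφewne w hw)
    rw [mul_comm, div_mul_cancel₀ _ hane]
  have hLbcont : ContinuousOn Lbar (Complex.re ⁻¹' Icc a 0) := by
    apply ContinuousOn.add
    · apply Complex.continuous_ofReal.comp_continuousOn
      apply Real.continuousOn_log.comp
      · apply continuous_norm.comp_continuousOn
        exact hext.comp Complex.continuous_exp.continuousOn (fun w hw => hwmem w hw)
      · intro w hw
        exact norm_ne_zero_iff.mpr (hφewne w hw)
    · apply ContinuousOn.mul ?_ continuousOn_const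
      apply Complex.continuous_ofReal.comp_continuousOn
      exact hΘcont.comp ((Complex.continuous_re.prodMk Complex.continuous_im).continuousOn)
        (fun w hw => Set.mk_mem_prod hw (Set.mem_univ _))
  have hOann : IsOpen {z : ℂ | q < ‖z‖ ∧ ‖z‖ < 1} := by
    have hs : {z : ℂ | q < ‖z‖ ∧ ‖z‖ < 1} =
        ((fun z : ℂ => ‖z‖) ⁻¹' Ioi q) ∩ ((fun z : ℂ => ‖z‖) ⁻¹' Iio 1) := by
      ext z
      simp [Set.mem_setOf_eq]
    rw [hs]
    exact (isOpen_Ioi.preimage continuous_norm).inter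
      (isOpen_Iio.preimage continuous_norm)
  have hstripopen : IsOpen (Complex.re ⁻¹' Ioo a 0) := isOpen_Ioo.preimage Complex.continuous_re
  have hLdiff : ∀ w₀ : ℂ, w₀.re ∈ Ioo a 0 → DifferentiableAt ℂ Lbar w₀ := by
    intro w₀ hw₀
    have hz₀o := hwmemo w₀ hw₀
    have hφd : DifferentiableAt ℂ φ (Complex.exp w₀) :=
      hhol.differentiableAt (hOann.mem_nhds hz₀o)
    set ψ : ℂ → ℂ := fun w => φ (Complex.exp w) with hψdef
    have hψd : DifferentiableAt ℂ ψ w₀ :=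
      hφd.comp w₀ (Complex.differentiable_exp.differentiableAt)
    have hψw₀ : ψ w₀ ≠ 0 := by
      show φ (Complex.exp w₀) ≠ 0
      rw [← heq hz₀o]
      exact hφewne w₀ ⟨hw₀.1.le, hw₀.2.le⟩
    obtain ⟨r, hr0, hball⟩ := Metric.mem_nhds_iff.mp
      (Filter.inter_mem (hstripopen.mem_nhds hw₀)
        (hψd.continuousAt.preimage_mem_nhds
          (Metric.ball_mem_nhds _ (norm_pos_iff.mpr hψw₀))))
    set g : ℂ → ℂ := fun w => Lbar w₀ + Complex.log (ψ w / ψ w₀) with hgdef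
    have hgd : DifferentiableAt ℂ g w₀ := by
      apply DifferentiableAt.const_add
      apply DifferentiableAt.clog (hψd.div_const _)
      rw [div_self hψw₀]
      exact Complex.one_mem_slitPlane
    have hballmem : ∀ w ∈ Metric.ball w₀ r,
        w.re ∈ Ioo a 0 ∧ ‖ψ w - ψ w₀‖ < ‖ψ w₀‖ := by
      intro w hw
      have h1 := hball hw
      refine ⟨h1.1, ?_⟩
      have h2 := h1.2
      rw [Set.mem_preimage, Metric.mem_ball, Complex.dist_eq] at h2
      exact h2
    have hψne : ∀ w ∈ Metric.ball w₀ r, ψ w ≠ 0 := by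
      intro w hw h
      have h2 := (hballmem w hw).2
      rw [h, zero_sub, norm_neg] at h2
      exact lt_irrefl _ h2
    have hquot : ∀ w ∈ Metric.ball w₀ r, ‖ψ w / ψ w₀ - 1‖ < 1 := by
      intro w hw
      rw [div_sub_one hψw₀, norm_div, div_lt_one (norm_pos_iff.mpr hψw₀)]
      exact (hballmem w hw).2
    have hψcball : ContinuousOn ψ (Metric.ball w₀ r) := by
      intro w hw
      exact ((hhol.differentiableAt (hOann.mem_nhds (hwmemo w (hballmem w hw).1))).comp w
        Complex.differentiable_exp.differentiableAt).continuousAt.continuousWithinAt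
    have hgc : ContinuousOn g (Metric.ball w₀ r) := by
      apply ContinuousOn.add continuousOn_const
      apply ContinuousOn.clog
      · exact hψcball.div continuousOn_const (fun w _ => hψw₀)
      · intro w hw
        exact re_pos_of_near_one (hquot w hw)
    have hLbc : ContinuousOn Lbar (Metric.ball w₀ r) :=
      hLbcont.mono (fun w hw => ⟨(hballmem w hw).1.1.le, (hballmem w hw).1.2.le⟩)
    have hexpg : ∀ w ∈ Metric.ball w₀ r, Complex.exp (g w) = Complex.exp (Lbar w) := by
      intro w hw
      have h1 : Complex.exp (Lbar w) = φbar (Complex.exp w) :=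
        hLexp w ⟨(hballmem w hw).1.1.le, (hballmem w hw).1.2.le⟩
      have h2 : φbar (Complex.exp w) = ψ w := heq (hwmemo w (hballmem w hw).1)
      show Complex.exp (Lbar w₀ + Complex.log (ψ w / ψ w₀)) = _
      rw [Complex.exp_add, Complex.exp_log (div_ne_zero (hψne w hw) hψw₀), h1, h2]
      have h3 : Complex.exp (Lbar w₀) = ψ w₀ := by
        rw [hLexp w₀ ⟨hw₀.1.le, hw₀.2.le⟩]
        exact heq hz₀o
      rw [h3, mul_comm, div_mul_cancel₀ _ hψw₀]
    have hgw₀ : g w₀ = Lbar w₀ := by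
      show Lbar w₀ + Complex.log (ψ w₀ / ψ w₀) = Lbar w₀
      rw [div_self hψw₀, Complex.log_one, add_zero]
    have heqloc : ∀ w ∈ Metric.ball w₀ r, Lbar w = g w := by
      intro w hw
      have hc := sub_const_of_exp_eq (convex_ball w₀ r).isPreconnected hgc hLbc hexpg
        hw (Metric.mem_ball_self hr0)
      rw [hgw₀, sub_self] at hc
      have := sub_eq_zero.mp hc
      exact this.symm
    have hev : Lbar =ᶠ[nhds w₀] g :=
      Filter.eventuallyEq_of_mem (Metric.ball_mem_nhds w₀ hr0) heqloc
    exact (hev.differentiableAt_iff).mpr hgd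
  -- oscillation bounds
  have hosc : ∀ u ∈ Icc q 1, ∀ t₁ ∈ Icc (0:ℝ) (2*π), ∀ t₂ ∈ Icc (0:ℝ) (2*π),
      thetaLift (u, t₁) - thetaLift (u, t₂) ≤ osc thetaLift u := by
    intro u hu t₁ ht₁ t₂ ht₂
    have hcu : ContinuousOn (fun t => thetaLift (u, t)) (Icc 0 (2*π)) :=
      hliftcont.comp ((continuous_const.prodMk continuous_id).continuousOn)
        (fun t ht => Set.mk_mem_prod hu ht)
    have hbdd : BddAbove ((fun t => thetaLift (u,t)) '' Icc 0 (2*π)) :=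
      isCompact_Icc.bddAbove_image hcu
    have hbdd2 : BddBelow ((fun t => thetaLift (u,t)) '' Icc 0 (2*π)) :=
      isCompact_Icc.bddBelow_image hcu
    have h1 : thetaLift (u,t₁) ≤ sSup ((fun t => thetaLift (u,t)) '' Icc 0 (2*π)) :=
      le_csSup hbdd (Set.mem_image_of_mem _ ht₁)
    have h2 : sInf ((fun t => thetaLift (u,t)) '' Icc 0 (2*π)) ≤ thetaLift (u,t₂) :=
      csInf_le hbdd2 (Set.mem_image_of_mem _ ht₂)
    rw [osc]
    linarith
  obtain ⟨B₀, hB₀⟩ := (isCompact_Icc.prod isCompact_Icc).exists_bound_of_continuousOn hliftcont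
  have hosc2 : ∀ u ∈ Icc q 1, osc thetaLift u ≤ 2*B₀ := by
    intro u hu
    have h0m : (0:ℝ) ∈ Icc (0:ℝ) (2*π) := ⟨le_refl _, twopi_pos.le⟩
    have hne : ((fun t => thetaLift (u,t)) '' Icc 0 (2*π)).Nonempty :=
      ⟨_, Set.mem_image_of_mem _ h0m⟩
    have hb : ∀ x ∈ (fun t => thetaLift (u,t)) '' Icc 0 (2*π), -B₀ ≤ x ∧ x ≤ B₀ := by
      rintro _ ⟨t, ht, rfl⟩
      have := hB₀ (u,t) (Set.mk_mem_prod hu ht)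
      rw [Real.norm_eq_abs] at this
      have := abs_le.mp this
      exact this
    have h1 : sSup ((fun t => thetaLift (u,t)) '' Icc 0 (2*π)) ≤ B₀ :=
      csSup_le hne (fun x hx => (hb x hx).2)
    have h2 : -B₀ ≤ sInf ((fun t => thetaLift (u,t)) '' Icc 0 (2*π)) :=
      le_csInf hne (fun x hx => (hb x hx).1)
    rw [osc]
    linarith
  have hΘdiff : ∀ x ∈ Icc a 0, ∀ y δ' : ℝ, |δ'| ≤ 2*π →
      Θ (x, y+δ') - Θ (x, y) ≤ osc thetaLift (Real.exp x) + 2*π := by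
    intro x hx y δ' hδ'
    have hkk' := floor_twopi_add_le (y := y) hδ'
    have hτm := self_sub_floor_mem y
    have hτ'm := self_sub_floor_mem (y+δ')
    have h1 := hosc (Real.exp x) (hexpmem x hx)
      (y+δ' - 2*π*⌊(y+δ')/(2*π)⌋) ⟨hτ'm.1, hτ'm.2.le⟩
      (y - 2*π*⌊y/(2*π)⌋) ⟨hτm.1, hτm.2.le⟩
    have h2 : (nn*(⌊(y+δ')/(2*π)⌋-⌊y/(2*π)⌋) : ℤ) ≤ 1 := by
      have ha := abs_le.mp hn1
      have hb := abs_le.mp hkk'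
      have hcase : nn = -1 ∨ nn = 0 ∨ nn = 1 := by omega
      rcases hcase with h | h | h <;> rw [h] <;> omega
    have h3 : 2*π*(nn:ℝ)*(⌊(y+δ')/(2*π)⌋:ℝ) - 2*π*(nn:ℝ)*(⌊y/(2*π)⌋:ℝ) ≤ 2*π := by
      have hc : ((nn*(⌊(y+δ')/(2*π)⌋-⌊y/(2*π)⌋) : ℤ):ℝ) ≤ 1 := by exact_mod_cast h2
      push_cast at hc
      nlinarith [twopi_pos]
    show thetaLift (Real.exp x, y+δ' - 2*π*⌊(y+δ')/(2*π)⌋) + 2*π*nn*⌊(y+δ')/(2*π)⌋ -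
      (thetaLift (Real.exp x, y - 2*π*⌊y/(2*π)⌋) + 2*π*nn*⌊y/(2*π)⌋) ≤
      osc thetaLift (Real.exp x) + 2*π
    linarith
  -- main Phragmén–Lindelöf argument
  intro u hu t ht s hs
  set δ : ℝ := t - s with hδdef
  have hδb : |δ| ≤ 2*π := by
    rw [abs_le]
    constructor
    · rw [hδdef]; linarith [ht.1, hs.2]
    · rw [hδdef]; linarith [ht.2, hs.1]
  set xu := Real.log u with hxud
  have hu0 : 0 < u := lt_of_lt_of_le hq0 hu.1
  have hxum : xu ∈ Icc a 0 := ⟨Real.log_le_log hq0 hu.1, Real.log_nonpos hu0.le hu.2⟩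
  have hexu : Real.exp xu = u := Real.exp_log hu0
  set f : ℂ → ℂ := fun w => Complex.exp (-I * (Lbar (w + ↑δ*I) - Lbar w)) with hfdef
  have hLim : ∀ w : ℂ, (Lbar w).im = Θ (w.re, w.im) := by
    intro w
    show (↑(Real.log (‖φbar (Complex.exp w)‖)) + ↑(Θ (w.re, w.im)) * I).im = _
    simp
  have hraux : ∀ w : ℂ, (w + ↑δ*I).re = w.re ∧ (w + ↑δ*I).im = w.im + δ := by
    intro w
    constructor <;> simp
  have hnorm : ∀ w : ℂ, ‖f w‖ = Real.exp (Θ (w.re, w.im + δ) - Θ (w.re, w.im)) := by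
    intro w
    show ‖Complex.exp (-I * (Lbar (w + ↑δ*I) - Lbar w))‖ = _
    rw [Complex.norm_exp]
    congr 1
    have hz : ∀ z : ℂ, (-I*z).re = z.im := by intro z; simp
    rw [hz, Complex.sub_im, hLim, hLim, (hraux w).1, (hraux w).2]
  set Cb := max (osc thetaLift q) (osc thetaLift 1) + 2*π with hCdef
  have key : ‖f (↑xu + ↑s*I)‖ ≤ Real.exp Cb := by
    apply PhragmenLindelof.vertical_strip (a := a) (b := 0)
    · constructor
      · intro w hw
        have hw' : w.re ∈ Ioo a 0 := hw
        have hd1 : DifferentiableAt ℂ Lbar w := hLdiff w hw'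
        have hd2 : DifferentiableAt ℂ (fun w' => Lbar (w' + ↑δ*I)) w := by
          have hmem2 : (w + ↑δ*I).re ∈ Ioo a 0 := by rw [(hraux w).1]; exact hw'
          exact (hLdiff _ hmem2).comp w ((differentiable_id.add_const _).differentiableAt)
        exact (((hd2.sub hd1).const_mul (-I)).cexp).differentiableWithinAt
      · have hclsub : closure (Complex.re ⁻¹' Ioo a 0) ⊆ Complex.re ⁻¹' Icc a 0 := by
          have hcp := Complex.continuous_re.closure_preimage_subset (Ioo a 0)
          rwa [closure_Ioo (ne_of_lt ha0)] at hcp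
        apply ContinuousOn.mono ?_ hclsub
        apply ContinuousOn.cexp
        apply ContinuousOn.mul continuousOn_const
        apply ContinuousOn.sub
        · apply hLbcont.comp (Continuous.continuousOn (continuous_id.add continuous_const))
          intro w hw
          show w + ↑δ * I ∈ _
          rw [Set.mem_preimage, (hraux w).1]
          exact hw
        · exact hLbcont
    · refine ⟨0, by
        have hpos : (0:ℝ) < 0 - a := by linarith
        positivity, 2*B₀+2*π, ?_⟩
      apply Asymptotics.IsBigO.of_bound 1
      rw [Filter.eventually_inf_principal]
      apply Filter.Eventually.of_forall
      intro w hw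
      rw [hnorm w]
      have hwm : w.re ∈ Icc a 0 := ⟨(Set.mem_preimage.mp hw).1.le, (Set.mem_preimage.mp hw).2.le⟩
      have h1 := hΘdiff w.re hwm w.im δ hδb
      have h2 := hosc2 (Real.exp w.re) (hexpmem _ hwm)
      have h3 : (0:ℝ)*|w.im| = 0 := by ring
      rw [h3, Real.exp_zero, one_mul, mul_one, Real.norm_eq_abs,
        abs_of_pos (Real.exp_pos _)]
      apply Real.exp_le_exp.mpr
      linarith
    · intro w hw
      rw [hnorm w, hw]
      apply Real.exp_le_exp.mpr
      have h1 := hΘdiff a ⟨le_refl a, ha0.le⟩ w.im δ hδb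
      rw [hea] at h1
      have h2 : osc thetaLift q ≤ max (osc thetaLift q) (osc thetaLift 1) := le_max_left _ _
      rw [hCdef]
      linarith
    · intro w hw
      rw [hnorm w, hw]
      apply Real.exp_le_exp.mpr
      have h1 := hΘdiff 0 ⟨ha0.le, le_refl 0⟩ w.im δ hδb
      rw [Real.exp_zero] at h1
      have h2 : osc thetaLift 1 ≤ max (osc thetaLift q) (osc thetaLift 1) := le_max_right _ _
      rw [hCdef]
      linarith
    · show a ≤ (↑xu + ↑s*I : ℂ).re
      simp only [Complex.add_re, Complex.ofReal_re, Complex.mul_re, Complex.ofReal_im,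
        Complex.I_re, Complex.I_im]
      simpa using hxum.1
    · show (↑xu + ↑s*I : ℂ).re ≤ 0
      simpa using hxum.2
  rw [hnorm] at key
  have hre2 : (↑xu + ↑s*I : ℂ).re = xu ∧ (↑xu + ↑s*I : ℂ).im = s := by
    constructor <;> simp
  rw [hre2.1, hre2.2] at key
  have hst : s + δ = t := by rw [hδdef]; ring
  rw [hst] at key
  have hkey2 := Real.exp_le_exp.mp key
  rw [hΘred xu hxum t ht, hΘred xu hxum s hs, hexu] at hkey2
  rw [hCdef] at hkey2
  exact hkey2
/-- Argument oscillation bound: for a biholomorphism φ of the annulus onto its image avoiding 0,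
any continuous lift θ̃ of the argument of φ̄(u e^{it}) satisfies
osc_u ≤ max(osc_q, osc_1) + 2π for every u ∈ [q,1]. -/
theorem argument_oscillation_bound (q : ℝ) (hq : q ∈ Set.Ioo (0 : ℝ) 1)
    (φ φbar : ℂ → ℂ)
    (hhol : DifferentiableOn ℂ φ {z : ℂ | q < ‖z‖ ∧ ‖z‖ < 1})
    (hinj : Set.InjOn φ {z : ℂ | q < ‖z‖ ∧ ‖z‖ < 1})
    (hext : ContinuousOn φbar {z : ℂ | q ≤ ‖z‖ ∧ ‖z‖ ≤ 1})
    (heq : Set.EqOn φbar φ {z : ℂ | q < ‖z‖ ∧ ‖z‖ < 1})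
    (h0 : (0 : ℂ) ∉ φbar '' {z : ℂ | q ≤ ‖z‖ ∧ ‖z‖ ≤ 1})
    (thetaLift : ℝ × ℝ → ℝ)
    (hliftcont : ContinuousOn thetaLift (Set.Icc q 1 ×ˢ Set.Icc 0 (2 * Real.pi)))
    (hlift : ∀ u ∈ Set.Icc q 1, ∀ t ∈ Set.Icc 0 (2 * Real.pi),
      Complex.exp ((thetaLift (u, t) : ℂ) * Complex.I) =
        φbar ((u : ℂ) * Complex.exp ((t : ℂ) * Complex.I)) /
          (↑(‖φbar ((u : ℂ) * Complex.exp ((t : ℂ) * Complex.I))‖) : ℂ)) :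
    ∀ u ∈ Set.Icc q 1,
      osc thetaLift u ≤ max (osc thetaLift q) (osc thetaLift 1) + 2 * Real.pi := by
  intro u hu
  obtain ⟨nn, hn1, hnn⟩ := exists_winding_int q hq φ φbar hinj hext heq h0
    thetaLift hliftcont hlift
  have hmain := strip_estimate q hq φ φbar hhol hext heq h0 thetaLift hliftcont hlift
    nn hn1 hnn u hu
  have hcu : ContinuousOn (fun t => thetaLift (u, t)) (Icc 0 (2*π)) :=
    hliftcont.comp ((continuous_const.prodMk continuous_id).continuousOn)
      (fun t ht => Set.mk_mem_prod hu ht)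
  have h0m : (0:ℝ) ∈ Icc (0:ℝ) (2*π) := ⟨le_refl _, twopi_pos.le⟩
  obtain ⟨t₁, ht₁, hmax⟩ := isCompact_Icc.exists_isMaxOn ⟨0, h0m⟩ hcu
  obtain ⟨t₂, ht₂, hmin⟩ := isCompact_Icc.exists_isMinOn ⟨0, h0m⟩ hcu
  have hsup : sSup ((fun t => thetaLift (u,t)) '' Icc 0 (2*π)) = thetaLift (u,t₁) :=
    IsGreatest.csSup_eq ⟨Set.mem_image_of_mem _ ht₁, by
      rintro _ ⟨t, ht, rfl⟩
      exact hmax ht⟩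
  have hinf : sInf ((fun t => thetaLift (u,t)) '' Icc 0 (2*π)) = thetaLift (u,t₂) :=
    IsLeast.csInf_eq ⟨Set.mem_image_of_mem _ ht₂, by
      rintro _ ⟨t, ht, rfl⟩
      exact hmin ht⟩
  have hosceq : osc thetaLift u = thetaLift (u,t₁) - thetaLift (u,t₂) := by
    rw [osc, hsup, hinf]
  rw [hosceq]
  exact hmain t₁ ht₁ t₂ ht₂
end
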